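/- Let M and N be representations of Q with End(M) = k·id, End(N) = k·id and Hom(M,N) = 0, and for each pair X,Y ∈ {M,N} let R_{X,Y} ⊆ R(X,Y) be a subset representing a basis of Ext(X,Y) (write R_X := R_{X,X}). If e ∈ R_{N,M} and B = B(e), then, under the identification R(B,B) ≅ R(N,N) ⊕ R(N,M) ⊕ R(M,N) ⊕ R(M,M) induced by B_q = M_q ⊕ N_q, the set R_B := (R_{N,M} ∖ {e}) ∪ R_M ∪ R_N ∪ R_{M,N} represents a basis of Ext(B,B). -/

import Mathlib

namespace QuivRep

variable (k : Type) [Field k] {V A : Type} (s t : A → V)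

/-- `RSp k s t X Y` is R(N,M) = ⊕_{a∈Q_1} Hom_k(N_{s(a)}, M_{t(a)}) where the
representation `N` has vertex spaces `X` and `M` has vertex spaces `Y`. -/
abbrev RSp (X Y : V → Type) [∀ q, AddCommGroup (X q)] [∀ q, Module k (X q)]
    [∀ q, AddCommGroup (Y q)] [∀ q, Module k (Y q)] : Type :=
  ∀ a : A, X (s a) →ₗ[k] Y (t a)

variable {X Y : V → Type}
  [∀ q, AddCommGroup (X q)] [∀ q, Module k (X q)]
  [∀ q, AddCommGroup (Y q)] [∀ q, Module k (Y q)]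

/-- The linear map `d_{N,M}` whose cokernel is Ext(N,M). Here `Nm` are the arrow
maps of `N` (on spaces `X`) and `Mm` those of `M` (on spaces `Y`). -/
def dMap (Nm : RSp k s t X X) (Mm : RSp k s t Y Y) :
    (∀ q, X q →ₗ[k] Y q) →ₗ[k] RSp k s t X Y where
  toFun f := fun a => (f (t a)).comp (Nm a) - (Mm a).comp (f (s a))
  map_add' f g := by
    funext a; ext x
    simp only [Pi.add_apply, LinearMap.add_comp, LinearMap.comp_add, LinearMap.sub_apply,
      LinearMap.add_apply, LinearMap.comp_apply]
    abel
  map_smul' c f := by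
    funext a; ext x
    simp [smul_sub]

/-- `f : M → N` is a morphism of representations (`M` on spaces `X`, `N` on spaces `Y`). -/
def IsRHom (Mm : RSp k s t X X) (Nm : RSp k s t Y Y) (f : ∀ q, X q →ₗ[k] Y q) : Prop :=
  ∀ a, (f (t a)).comp (Mm a) = (Nm a).comp (f (s a))

/-- Isomorphism of representations. -/
def RIso (Mm : RSp k s t X X) (Nm : RSp k s t Y Y) : Prop :=
  ∃ f : ∀ q, X q →ₗ[k] Y q, IsRHom k s t Mm Nm f ∧ ∀ q, Function.Bijective (f q)

/-- A family of submodules is a subrepresentation. -/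
def IsSubRep (Mm : RSp k s t X X) (U : ∀ q, Submodule k (X q)) : Prop :=
  ∀ a, ∀ x ∈ U (s a), Mm a x ∈ U (t a)

/-- Indecomposability: nonzero, and no nontrivial internal direct sum decomposition. -/
def Indec (Mm : RSp k s t X X) : Prop :=
  (∃ q, ∃ x : X q, x ≠ 0) ∧
  ∀ U W : ∀ q, Submodule k (X q), IsSubRep k s t Mm U → IsSubRep k s t Mm W →
    (∀ q, U q ⊓ W q = ⊥) → (∀ q, U q ⊔ W q = ⊤) →
    (∀ q, U q = ⊥) ∨ (∀ q, W q = ⊥)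

/-- The middle term `B(f,λ,μ)` of the extension determined by `f ∈ R(N,M)`:
vertex spaces `Y q × X q`, arrow maps `[[Mm, f],[0, Nm]]`. -/
def BExt (Mm : RSp k s t Y Y) (Nm : RSp k s t X X) (f : RSp k s t X Y) :
    RSp k s t (fun q => Y q × X q) (fun q => Y q × X q) :=
  fun a => LinearMap.prod
    ((Mm a).comp (LinearMap.fst k (Y (s a)) (X (s a))) +
      (f a).comp (LinearMap.snd k (Y (s a)) (X (s a))))
    ((Nm a).comp (LinearMap.snd k (Y (s a)) (X (s a))))

/-- `U` is strong: every deformation `M(λ)`, `λ ∈ U`, is indecomposable. -/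
def Strong (Mm : RSp k s t X X) (U : Set (RSp k s t X X)) : Prop :=
  ∀ lam ∈ U, Indec k s t (Mm + lam)

/-- `U` is separating: `M(λ) ≅ M(μ)` implies `λ = μ` for `λ, μ ∈ U`. -/
def Separating (Mm : RSp k s t X X) (U : Set (RSp k s t X X)) : Prop :=
  ∀ lam ∈ U, ∀ mu ∈ U, RIso k s t (Mm + lam) (Mm + mu) → lam = mu

/-- `End(M) = k·id`. -/
def EndTrivial (Mm : RSp k s t X X) : Prop :=
  ∀ f : ∀ q, X q →ₗ[k] X q, IsRHom k s t Mm Mm f → ∃ c : k, ∀ q, f q = c • LinearMap.id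

/-- `Hom(M,N) = 0`. -/
def HomZero (Mm : RSp k s t X X) (Nm : RSp k s t Y Y) : Prop :=
  ∀ f : ∀ q, X q →ₗ[k] Y q, IsRHom k s t Mm Nm f → f = 0

end QuivRep


open QuivRep

variable {k : Type} [Field k] {V A : Type} [Fintype V] [Fintype A] (s t : A → V)
variable {X Y : V → Type}
  [∀ q, AddCommGroup (X q)] [∀ q, Module k (X q)] [∀ q, FiniteDimensional k (X q)]
  [∀ q, AddCommGroup (Y q)] [∀ q, Module k (Y q)] [∀ q, FiniteDimensional k (Y q)]

/-- A subset `S ⊆ R(N,M)` represents a basis of `Ext(N,M)`: the projection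
`π_{N,M}` restricts to a bijection from `S` onto a `k`-basis of `Ext(N,M)`. -/
def RepBasis (Nm : RSp k s t X X) (Mm : RSp k s t Y Y) (S : Set (RSp k s t X Y)) : Prop :=
  LinearIndependent k (fun x : S =>
    Submodule.Quotient.mk (p := LinearMap.range (dMap k s t Nm Mm)) (x : RSp k s t X Y)) ∧
  Submodule.span k
    ((fun x => Submodule.Quotient.mk (p := LinearMap.range (dMap k s t Nm Mm)) x) '' S) = ⊤

/-- Embedding `R(M,M) → R(B,B)` (block `(1,1)`), under `B_q = M_q ⊕ N_q = Y_q × X_q`. -/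
def embMM (f : RSp k s t Y Y) : RSp k s t (fun q => Y q × X q) (fun q => Y q × X q) :=
  fun a => (LinearMap.inl k (Y (t a)) (X (t a))).comp
    ((f a).comp (LinearMap.fst k (Y (s a)) (X (s a))))

/-- Embedding `R(N,N) → R(B,B)` (block `(2,2)`). -/
def embNN (f : RSp k s t X X) : RSp k s t (fun q => Y q × X q) (fun q => Y q × X q) :=
  fun a => (LinearMap.inr k (Y (t a)) (X (t a))).comp
    ((f a).comp (LinearMap.snd k (Y (s a)) (X (s a))))

/-- Embedding `R(N,M) → R(B,B)` (block `(1,2)`). -/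
def embNM (f : RSp k s t X Y) : RSp k s t (fun q => Y q × X q) (fun q => Y q × X q) :=
  fun a => (LinearMap.inl k (Y (t a)) (X (t a))).comp
    ((f a).comp (LinearMap.snd k (Y (s a)) (X (s a))))

/-- Embedding `R(M,N) → R(B,B)` (block `(2,1)`). -/
def embMN (f : RSp k s t Y X) : RSp k s t (fun q => Y q × X q) (fun q => Y q × X q) :=
  fun a => (LinearMap.inr k (Y (t a)) (X (t a))).comp
    ((f a).comp (LinearMap.fst k (Y (s a)) (X (s a))))

section Aux
set_option linter.unusedSectionVars false

/-! Auxiliary infrastructure for the proof of `statement9`. -/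

/-- The map `d_{B,B}` for `B = B(e)`. -/
abbrev dBB (Mm : RSp k s t Y Y) (Nm : RSp k s t X X) (e : RSp k s t X Y) :
    (∀ q, (Y q × X q) →ₗ[k] (Y q × X q)) →ₗ[k]
      RSp k s t (fun q => Y q × X q) (fun q => Y q × X q) :=
  dMap k s t (BExt k s t Mm Nm e) (BExt k s t Mm Nm e)

/-- Block projection onto `R(M,M)`. -/
def pMM : RSp k s t (fun q => Y q × X q) (fun q => Y q × X q) →ₗ[k] RSp k s t Y Y where
  toFun r := fun a => (LinearMap.fst k (Y (t a)) (X (t a))).comp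
    ((r a).comp (LinearMap.inl k (Y (s a)) (X (s a))))
  map_add' r r' := by funext a; ext v; simp
  map_smul' c r := by funext a; ext v; simp

/-- Block projection onto `R(N,M)`. -/
def pNM : RSp k s t (fun q => Y q × X q) (fun q => Y q × X q) →ₗ[k] RSp k s t X Y where
  toFun r := fun a => (LinearMap.fst k (Y (t a)) (X (t a))).comp
    ((r a).comp (LinearMap.inr k (Y (s a)) (X (s a))))
  map_add' r r' := by funext a; ext v; simp
  map_smul' c r := by funext a; ext v; simp

/-- Block projection onto `R(M,N)`. -/
def pMN : RSp k s t (fun q => Y q × X q) (fun q => Y q × X q) →ₗ[k] RSp k s t Y X where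
  toFun r := fun a => (LinearMap.snd k (Y (t a)) (X (t a))).comp
    ((r a).comp (LinearMap.inl k (Y (s a)) (X (s a))))
  map_add' r r' := by funext a; ext v; simp
  map_smul' c r := by funext a; ext v; simp

/-- Block projection onto `R(N,N)`. -/
def pNN : RSp k s t (fun q => Y q × X q) (fun q => Y q × X q) →ₗ[k] RSp k s t X X where
  toFun r := fun a => (LinearMap.snd k (Y (t a)) (X (t a))).comp
    ((r a).comp (LinearMap.inr k (Y (s a)) (X (s a))))
  map_add' r r' := by funext a; ext v; simp
  map_smul' c r := by funext a; ext v; simp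

/-- Hom block `(1,1)`. -/
def HMM (g : ∀ q, Y q →ₗ[k] Y q) : ∀ q, (Y q × X q) →ₗ[k] (Y q × X q) :=
  fun q => (LinearMap.inl k (Y q) (X q)).comp ((g q).comp (LinearMap.fst k (Y q) (X q)))

/-- Hom block `(1,2)`. -/
def HNM (g : ∀ q, X q →ₗ[k] Y q) : ∀ q, (Y q × X q) →ₗ[k] (Y q × X q) :=
  fun q => (LinearMap.inl k (Y q) (X q)).comp ((g q).comp (LinearMap.snd k (Y q) (X q)))

/-- Hom block `(2,1)`. -/
def HMN (g : ∀ q, Y q →ₗ[k] X q) : ∀ q, (Y q × X q) →ₗ[k] (Y q × X q) :=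
  fun q => (LinearMap.inr k (Y q) (X q)).comp ((g q).comp (LinearMap.fst k (Y q) (X q)))

/-- Hom block `(2,2)`. -/
def HNN (g : ∀ q, X q →ₗ[k] X q) : ∀ q, (Y q × X q) →ₗ[k] (Y q × X q) :=
  fun q => (LinearMap.inr k (Y q) (X q)).comp ((g q).comp (LinearMap.snd k (Y q) (X q)))

/-- `embMM` as a linear map. -/
def LembMM : RSp k s t Y Y →ₗ[k] RSp k s t (fun q => Y q × X q) (fun q => Y q × X q) where
  toFun := embMM s t
  map_add' f g := by funext a; ext v <;> simp [embMM]
  map_smul' c f := by funext a; ext v <;> simp [embMM]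

/-- `embNM` as a linear map. -/
def LembNM : RSp k s t X Y →ₗ[k] RSp k s t (fun q => Y q × X q) (fun q => Y q × X q) where
  toFun := embNM s t
  map_add' f g := by funext a; ext v <;> simp [embNM]
  map_smul' c f := by funext a; ext v <;> simp [embNM]

/-- `embMN` as a linear map. -/
def LembMN : RSp k s t Y X →ₗ[k] RSp k s t (fun q => Y q × X q) (fun q => Y q × X q) where
  toFun := embMN s t
  map_add' f g := by funext a; ext v <;> simp [embMN]
  map_smul' c f := by funext a; ext v <;> simp [embMN]

/-- `embNN` as a linear map. -/
def LembNN : RSp k s t X X →ₗ[k] RSp k s t (fun q => Y q × X q) (fun q => Y q × X q) where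
  toFun := embNN s t
  map_add' f g := by funext a; ext v <;> simp [embNN]
  map_smul' c f := by funext a; ext v <;> simp [embNN]

@[simp] lemma pMM_embMM (r : RSp k s t Y Y) : pMM s t (embMM s t (X := X) r) = r := by
  funext a; ext v; simp [pMM, embMM]
@[simp] lemma pMM_embNM (r : RSp k s t X Y) : pMM s t (embNM s t r) = 0 := by
  funext a; ext v; simp [pMM, embNM]
@[simp] lemma pMM_embMN (r : RSp k s t Y X) : pMM s t (embMN s t r) = 0 := by
  funext a; ext v; simp [pMM, embMN]
@[simp] lemma pMM_embNN (r : RSp k s t X X) : pMM s t (embNN s t (Y := Y) r) = 0 := by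
  funext a; ext v; simp [pMM, embNN]

@[simp] lemma pNM_embMM (r : RSp k s t Y Y) : pNM s t (embMM s t (X := X) r) = 0 := by
  funext a; ext v; simp [pNM, embMM]
@[simp] lemma pNM_embNM (r : RSp k s t X Y) : pNM s t (embNM s t r) = r := by
  funext a; ext v; simp [pNM, embNM]
@[simp] lemma pNM_embMN (r : RSp k s t Y X) : pNM s t (embMN s t r) = 0 := by
  funext a; ext v; simp [pNM, embMN]
@[simp] lemma pNM_embNN (r : RSp k s t X X) : pNM s t (embNN s t (Y := Y) r) = 0 := by
  funext a; ext v; simp [pNM, embNN]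

@[simp] lemma pMN_embMM (r : RSp k s t Y Y) : pMN s t (embMM s t (X := X) r) = 0 := by
  funext a; ext v; simp [pMN, embMM]
@[simp] lemma pMN_embNM (r : RSp k s t X Y) : pMN s t (embNM s t r) = 0 := by
  funext a; ext v; simp [pMN, embNM]
@[simp] lemma pMN_embMN (r : RSp k s t Y X) : pMN s t (embMN s t r) = r := by
  funext a; ext v; simp [pMN, embMN]
@[simp] lemma pMN_embNN (r : RSp k s t X X) : pMN s t (embNN s t (Y := Y) r) = 0 := by
  funext a; ext v; simp [pMN, embNN]

@[simp] lemma pNN_embMM (r : RSp k s t Y Y) : pNN s t (embMM s t (X := X) r) = 0 := by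
  funext a; ext v; simp [pNN, embMM]
@[simp] lemma pNN_embNM (r : RSp k s t X Y) : pNN s t (embNM s t r) = 0 := by
  funext a; ext v; simp [pNN, embNM]
@[simp] lemma pNN_embMN (r : RSp k s t Y X) : pNN s t (embMN s t r) = 0 := by
  funext a; ext v; simp [pNN, embMN]
@[simp] lemma pNN_embNN (r : RSp k s t X X) : pNN s t (embNN s t (Y := Y) r) = r := by
  funext a; ext v; simp [pNN, embNN]

lemma embMM_inj : Function.Injective (embMM s t : RSp k s t Y Y → RSp k s t (fun q => Y q × X q) (fun q => Y q × X q)) := by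
  intro r r' h
  have := congrArg (pMM s t) h; simpa using this
lemma embNM_inj : Function.Injective (embNM s t : RSp k s t X Y → RSp k s t (fun q => Y q × X q) (fun q => Y q × X q)) := by
  intro r r' h
  have := congrArg (pNM s t) h; simpa using this
lemma embMN_inj : Function.Injective (embMN s t : RSp k s t Y X → RSp k s t (fun q => Y q × X q) (fun q => Y q × X q)) := by
  intro r r' h
  have := congrArg (pMN s t) h; simpa using this
lemma embNN_inj : Function.Injective (embNN s t : RSp k s t X X → RSp k s t (fun q => Y q × X q) (fun q => Y q × X q)) := by
  intro r r' h
  have := congrArg (pNN s t) h; simpa using this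

variable (Mm : RSp k s t Y Y) (Nm : RSp k s t X X) (e : RSp k s t X Y)

lemma E_MM (g : ∀ q, Y q →ₗ[k] Y q) :
    dBB s t Mm Nm e (HMM g) =
      embMM s t (dMap k s t Mm Mm g) + embNM s t (fun a => (g (t a)).comp (e a)) := by
  funext a; ext v <;> simp [dBB, dMap, BExt, HMM, embMM, embNM]

lemma E_NM (g : ∀ q, X q →ₗ[k] Y q) :
    dBB s t Mm Nm e (HNM g) = embNM s t (dMap k s t Nm Mm g) := by
  funext a; ext v <;> simp [dBB, dMap, BExt, HNM, embNM]

lemma E_MN (g : ∀ q, Y q →ₗ[k] X q) :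
    dBB s t Mm Nm e (HMN g) =
      embMN s t (dMap k s t Mm Nm g) + embNN s t (fun a => (g (t a)).comp (e a))
        - embMM s t (fun a => (e a).comp (g (s a))) := by
  funext a; ext v <;> simp [dBB, dMap, BExt, HMN, embMN, embNN, embMM]

lemma E_NN (g : ∀ q, X q →ₗ[k] X q) :
    dBB s t Mm Nm e (HNN g) =
      embNN s t (dMap k s t Nm Nm g) - embNM s t (fun a => (e a).comp (g (s a))) := by
  funext a; ext v <;> simp [dBB, dMap, BExt, HNN, embNN, embNM]

lemma hom_decomp (f : ∀ q, (Y q × X q) →ₗ[k] (Y q × X q)) :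
    f = HMM (fun q => (LinearMap.fst k (Y q) (X q)).comp
          ((f q).comp (LinearMap.inl k (Y q) (X q))))
      + HNM (fun q => (LinearMap.fst k (Y q) (X q)).comp
          ((f q).comp (LinearMap.inr k (Y q) (X q))))
      + HMN (fun q => (LinearMap.snd k (Y q) (X q)).comp
          ((f q).comp (LinearMap.inl k (Y q) (X q))))
      + HNN (fun q => (LinearMap.snd k (Y q) (X q)).comp
          ((f q).comp (LinearMap.inr k (Y q) (X q)))) := by
  funext q; ext v <;> simp [HMM, HNM, HMN, HNN, Prod.mk_zero_zero]

lemma r_decomp (r : RSp k s t (fun q => Y q × X q) (fun q => Y q × X q)) :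
    r = embMM s t (pMM s t r) + embNM s t (pNM s t r) + embMN s t (pMN s t r)
      + embNN s t (pNN s t r) := by
  funext a; ext v <;> simp [embMM, embNM, embMN, embNN, pMM, pNM, pMN, pNN, Prod.mk_zero_zero]

lemma pMM_dB (f : ∀ q, (Y q × X q) →ₗ[k] (Y q × X q)) :
    pMM s t (dBB s t Mm Nm e f) =
      dMap k s t Mm Mm (fun q => (LinearMap.fst k (Y q) (X q)).comp
          ((f q).comp (LinearMap.inl k (Y q) (X q))))
      - (fun a => (e a).comp ((LinearMap.snd k (Y (s a)) (X (s a))).comp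
          ((f (s a)).comp (LinearMap.inl k (Y (s a)) (X (s a)))))) := by
  conv_lhs => rw [hom_decomp f]
  simp only [map_add]
  rw [E_MM, E_NM, E_MN, E_NN]
  simp only [map_add, map_sub, pMM_embMM, pMM_embNM, pMM_embMN, pMM_embNN]
  abel

lemma pNM_dB (f : ∀ q, (Y q × X q) →ₗ[k] (Y q × X q)) :
    pNM s t (dBB s t Mm Nm e f) =
      dMap k s t Nm Mm (fun q => (LinearMap.fst k (Y q) (X q)).comp
          ((f q).comp (LinearMap.inr k (Y q) (X q))))
      + (fun a => (((LinearMap.fst k (Y (t a)) (X (t a))).comp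
          ((f (t a)).comp (LinearMap.inl k (Y (t a)) (X (t a)))))).comp (e a))
      - (fun a => (e a).comp ((LinearMap.snd k (Y (s a)) (X (s a))).comp
          ((f (s a)).comp (LinearMap.inr k (Y (s a)) (X (s a)))))) := by
  conv_lhs => rw [hom_decomp f]
  simp only [map_add]
  rw [E_MM, E_NM, E_MN, E_NN]
  simp only [map_add, map_sub, pNM_embMM, pNM_embNM, pNM_embMN, pNM_embNN]
  abel

lemma pMN_dB (f : ∀ q, (Y q × X q) →ₗ[k] (Y q × X q)) :
    pMN s t (dBB s t Mm Nm e f) =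
      dMap k s t Mm Nm (fun q => (LinearMap.snd k (Y q) (X q)).comp
          ((f q).comp (LinearMap.inl k (Y q) (X q)))) := by
  conv_lhs => rw [hom_decomp f]
  simp only [map_add]
  rw [E_MM, E_NM, E_MN, E_NN]
  simp only [map_add, map_sub, pMN_embMM, pMN_embNM, pMN_embMN, pMN_embNN]
  abel

lemma pNN_dB (f : ∀ q, (Y q × X q) →ₗ[k] (Y q × X q)) :
    pNN s t (dBB s t Mm Nm e f) =
      dMap k s t Nm Nm (fun q => (LinearMap.snd k (Y q) (X q)).comp
          ((f q).comp (LinearMap.inr k (Y q) (X q))))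
      + (fun a => (((LinearMap.snd k (Y (t a)) (X (t a))).comp
          ((f (t a)).comp (LinearMap.inl k (Y (t a)) (X (t a)))))).comp (e a)) := by
  conv_lhs => rw [hom_decomp f]
  simp only [map_add]
  rw [E_MM, E_NM, E_MN, E_NN]
  simp only [map_add, map_sub, pNN_embMM, pNN_embNM, pNN_embMN, pNN_embNN]
  abel

lemma embNM_e_mem : embNM s t e ∈ LinearMap.range (dBB s t Mm Nm e) := by
  refine ⟨HMM (fun q => LinearMap.id), ?_⟩
  rw [E_MM]
  have h1 : dMap k s t Mm Mm (fun q => (LinearMap.id : Y q →ₗ[k] Y q)) = 0 := by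
    funext a; ext v; simp [dMap]
  have h2 : (fun a => (LinearMap.id : Y (t a) →ₗ[k] Y (t a)).comp (e a)) = e := by
    funext a; ext v; simp
  rw [h1, h2]
  have h3 : embMM s t (X := X) (0 : RSp k s t Y Y) = 0 := map_zero (LembMM s t)
  rw [h3, zero_add]

lemma embNM_eq_embMM {w : RSp k s t X Y} {r : RSp k s t Y Y}
    (h : embNM s t w = embMM s t (X := X) r) : w = 0 ∧ r = 0 :=
  ⟨by simpa using congrArg (pNM s t) h, by simpa using congrArg (pMM s t) h.symm⟩

lemma embNM_eq_embNN {w : RSp k s t X Y} {u : RSp k s t X X}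
    (h : embNM s t w = embNN s t (Y := Y) u) : w = 0 ∧ u = 0 :=
  ⟨by simpa using congrArg (pNM s t) h, by simpa using congrArg (pNN s t) h.symm⟩

lemma embNM_eq_embMN {w : RSp k s t X Y} {v : RSp k s t Y X}
    (h : embNM s t w = embMN s t v) : w = 0 ∧ v = 0 :=
  ⟨by simpa using congrArg (pNM s t) h, by simpa using congrArg (pMN s t) h.symm⟩

lemma embMM_eq_embNN {r : RSp k s t Y Y} {u : RSp k s t X X}
    (h : embMM s t (X := X) r = embNN s t (Y := Y) u) : r = 0 ∧ u = 0 :=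
  ⟨by simpa using congrArg (pMM s t) h, by simpa using congrArg (pNN s t) h.symm⟩

lemma embMM_eq_embMN {r : RSp k s t Y Y} {v : RSp k s t Y X}
    (h : embMM s t (X := X) r = embMN s t v) : r = 0 ∧ v = 0 :=
  ⟨by simpa using congrArg (pMM s t) h, by simpa using congrArg (pMN s t) h.symm⟩

lemma embNN_eq_embMN {u : RSp k s t X X} {v : RSp k s t Y X}
    (h : embNN s t (Y := Y) u = embMN s t v) : u = 0 ∧ v = 0 :=
  ⟨by simpa using congrArg (pNN s t) h, by simpa using congrArg (pMN s t) h.symm⟩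

/-- The key summation identity for extracting block coefficients. -/
lemma sum_block {W : Type} [AddCommGroup W] [Module k W]
    {g : W → RSp k s t (fun q => Y q × X q) (fun q => Y q × X q)}
    (hg : Function.Injective g)
    (p : RSp k s t (fun q => Y q × X q) (fun q => Y q × X q) →ₗ[k] W)
    (hpg : ∀ w, p (g w) = w)
    (l : RSp k s t (fun q => Y q × X q) (fun q => Y q × X q) →₀ k)
    (hl0 : ∀ x ∈ l.support, x ∉ Set.range g → p x = 0) :
    p (Finsupp.linearCombination k _root_.id l)
      = Finsupp.linearCombination k _root_.id (Finsupp.comapDomain g l hg.injOn) := by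
  classical
  rw [Finsupp.apply_linearCombination_id, Finsupp.linearCombination_apply,
    Finsupp.linearCombination_apply]
  rw [Finsupp.sum, Finsupp.sum, Finsupp.comapDomain_support]
  rw [← Finset.sum_preimage g l.support hg.injOn (fun x => l x • p x)
    (fun x hx hr => by simp [hl0 x hx hr])]
  refine Finset.sum_congr rfl fun w _ => ?_
  simp [Function.comp, hpg]

/-- Quotient-span criterion. -/
lemma span_quot_top {W : Type} [AddCommGroup W] [Module k W] (p : Submodule k W) (T : Set W) :
    Submodule.span k ((fun x => Submodule.Quotient.mk (p := p) x) '' T) = ⊤ ↔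
      p ⊔ Submodule.span k T = ⊤ := by
  rw [show (fun x : W => Submodule.Quotient.mk (p := p) x) = ⇑p.mkQ from rfl,
    Submodule.span_image, Submodule.map_mkQ_eq_top]

lemma mk_lc_eq {W : Type} [AddCommGroup W] [Module k W] (p : Submodule k W) (l : W →₀ k) :
    Finsupp.linearCombination k (fun x : W => Submodule.Quotient.mk (p := p) x) l
      = p.mkQ (Finsupp.linearCombination k _root_.id l) :=
  (Finsupp.apply_linearCombination_id k p.mkQ l).symm

end Aux

set_option maxHeartbeats 2000000

/-- Corollary `extbasis`.  Let `M`, `N` be Schurian with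
`Hom(M,N) = 0`, and let `R_{X,Y} ⊆ R(X,Y)` represent bases of `Ext(X,Y)` for
`X,Y ∈ {M,N}`.  If `e ∈ R_{N,M}` and `B = B(e)`, then under the identification
`R(B,B) ≅ R(N,N) ⊕ R(N,M) ⊕ R(M,N) ⊕ R(M,M)`, the set
`R_B := (R_{N,M} ∖ {e}) ∪ R_M ∪ R_N ∪ R_{M,N}` represents a basis of `Ext(B,B)`. -/
theorem statement9
    (Mm : RSp k s t Y Y) (Nm : RSp k s t X X)
    (hEndM : EndTrivial k s t Mm) (hEndN : EndTrivial k s t Nm)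
    (hHomMN : HomZero k s t Mm Nm)
    (RM : Set (RSp k s t Y Y)) (RN : Set (RSp k s t X X))
    (RNM : Set (RSp k s t X Y)) (RMN : Set (RSp k s t Y X))
    (hRM : RepBasis s t Mm Mm RM) (hRN : RepBasis s t Nm Nm RN)
    (hRNM : RepBasis s t Nm Mm RNM) (hRMN : RepBasis s t Mm Nm RMN)
    (e : RSp k s t X Y) (he : e ∈ RNM) :
    RepBasis s t (BExt k s t Mm Nm e) (BExt k s t Mm Nm e)
      ((embNM s t '' (RNM \ {e})) ∪ (embMM s t '' RM) ∪ (embNN s t '' RN) ∪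
        (embMN s t '' RMN)) := by
  classical
  set SS : Set (RSp k s t (fun q => Y q × X q) (fun q => Y q × X q)) :=
    ((embNM s t '' (RNM \ {e})) ∪ (embMM s t '' RM) ∪ (embNN s t '' RN) ∪
      (embMN s t '' RMN)) with hSS
  set KB : Submodule k (RSp k s t (fun q => Y q × X q) (fun q => Y q × X q)) :=
    LinearMap.range (dMap k s t (BExt k s t Mm Nm e) (BExt k s t Mm Nm e)) with hKB
  -- finsupp versions of the independence hypotheses
  have hfinNM := linearIndepOn_iff.mp hRNM.1
  have hfinM := linearIndepOn_iff.mp hRM.1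
  have hfinN := linearIndepOn_iff.mp hRN.1
  have hfinMN := linearIndepOn_iff.mp hRMN.1
  -- nonzero facts
  have h0M : (0 : RSp k s t Y Y) ∉ RM := fun h => hRM.1.ne_zero ⟨0, h⟩ (by simp)
  have h0N : (0 : RSp k s t X X) ∉ RN := fun h => hRN.1.ne_zero ⟨0, h⟩ (by simp)
  have h0NM : (0 : RSp k s t X Y) ∉ RNM := fun h => hRNM.1.ne_zero ⟨0, h⟩ (by simp)
  have h0MN : (0 : RSp k s t Y X) ∉ RMN := fun h => hRMN.1.ne_zero ⟨0, h⟩ (by simp)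
  -- case analysis on membership in `SS`
  have casesS : ∀ x, x ∈ SS →
      (∃ w, (w ∈ RNM ∧ w ≠ e) ∧ embNM s t w = x) ∨
      (∃ r, r ∈ RM ∧ embMM s t (X := X) r = x) ∨
      (∃ u, u ∈ RN ∧ embNN s t (Y := Y) u = x) ∨
      (∃ v, v ∈ RMN ∧ embMN s t v = x) := by
    intro x hx
    rw [hSS] at hx
    rcases hx with ((⟨w, hw, hwx⟩ | ⟨r, hr, hrx⟩) | ⟨u, hu, hux⟩) | ⟨v, hv, hvx⟩
    · exact Or.inl ⟨w, ⟨hw.1, hw.2⟩, hwx⟩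
    · exact Or.inr (Or.inl ⟨r, hr, hrx⟩)
    · exact Or.inr (Or.inr (Or.inl ⟨u, hu, hux⟩))
    · exact Or.inr (Or.inr (Or.inr ⟨v, hv, hvx⟩))
  refine ⟨?_, ?_⟩
  · -- linear independence
    refine linearIndepOn_iff.mpr ?_
    intro l hl hl0
    have hlS : ↑l.support ⊆ SS := (Finsupp.mem_supported k l).mp hl
    set z := Finsupp.linearCombination k _root_.id l with hz
    have hzK : z ∈ KB := by
      have h2 : KB.mkQ z = 0 := by
        rw [hz, ← mk_lc_eq]
        exact hl0
      rwa [Submodule.mkQ_apply, Submodule.Quotient.mk_eq_zero] at h2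
    obtain ⟨f, hf⟩ := hzK
    set fMM := fun q => (LinearMap.fst k (Y q) (X q)).comp
      ((f q).comp (LinearMap.inl k (Y q) (X q))) with hfMMdef
    set fNM := fun q => (LinearMap.fst k (Y q) (X q)).comp
      ((f q).comp (LinearMap.inr k (Y q) (X q))) with hfNMdef
    set fMN := fun q => (LinearMap.snd k (Y q) (X q)).comp
      ((f q).comp (LinearMap.inl k (Y q) (X q))) with hfMNdef
    set fNN := fun q => (LinearMap.snd k (Y q) (X q)).comp
      ((f q).comp (LinearMap.inr k (Y q) (X q))) with hfNNdef
    have hMN : pMN s t z = dMap k s t Mm Nm fMN := by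
      rw [← hf]; exact pMN_dB s t Mm Nm e f
    have hMM : pMM s t z = dMap k s t Mm Mm fMM - (fun a => (e a).comp (fMN (s a))) := by
      rw [← hf]; exact pMM_dB s t Mm Nm e f
    have hNN : pNN s t z = dMap k s t Nm Nm fNN + (fun a => (fMN (t a)).comp (e a)) := by
      rw [← hf]; exact pNN_dB s t Mm Nm e f
    have hNM : pNM s t z = dMap k s t Nm Mm fNM + (fun a => (fMM (t a)).comp (e a))
        - (fun a => (e a).comp (fNN (s a))) := by
      rw [← hf]; exact pNM_dB s t Mm Nm e f
    -- Step 1: the (M,N) block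
    have hsideMN : ∀ x ∈ l.support, x ∉ Set.range (embMN s t (X := X) (Y := Y)) →
        pMN s t x = 0 := by
      intro x hx hnr
      rcases casesS x (hlS hx) with ⟨w, _, rfl⟩ | ⟨r, _, rfl⟩ | ⟨u, _, rfl⟩ | ⟨v, _, rfl⟩
      · simp
      · simp
      · simp
      · exact absurd ⟨v, rfl⟩ hnr
    set lA := Finsupp.comapDomain (embMN s t) l (embMN_inj s t).injOn with hlAdef
    have hlA : pMN s t z = Finsupp.linearCombination k _root_.id lA := by
      rw [hz]; exact sum_block s t (embMN_inj s t) (pMN s t) (pMN_embMN s t) l hsideMN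
    have hsuppA : ↑lA.support ⊆ RMN := by
      intro v hv
      have hv' : embMN s t v ∈ l.support := by
        rw [Finsupp.mem_support_iff]
        have h2x := Finsupp.mem_support_iff.mp (Finset.mem_coe.mp hv)
        rwa [hlAdef, Finsupp.comapDomain_apply] at h2x
      rcases casesS _ (hlS hv') with ⟨w, hw, hwe⟩ | ⟨r, hr, hre⟩ | ⟨u, hu, hue⟩ | ⟨v', hv'', hve⟩
      · exact absurd ((embNM_eq_embMN s t hwe).1 ▸ hw.1) h0NM
      · have h1 := embMM_eq_embMN s t hre
        exact absurd (h1.1 ▸ hr) h0M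
      · have h1 := embNN_eq_embMN s t hue
        exact absurd (h1.1 ▸ hu) h0N
      · have h1 : v' = v := embMN_inj s t hve
        exact h1 ▸ hv''
    have hlA0 : lA = 0 := by
      apply hfinMN lA ((Finsupp.mem_supported k _).mpr hsuppA)
      have hgoal : (LinearMap.range (dMap k s t Mm Nm)).mkQ
          (Finsupp.linearCombination k _root_.id lA) = 0 := by
        rw [← hlA, hMN, Submodule.mkQ_apply, Submodule.Quotient.mk_eq_zero]
        exact ⟨fMN, rfl⟩
      exact (Finsupp.apply_linearCombination_id k _ lA).symm.trans hgoal
    have hdMN0 : dMap k s t Mm Nm fMN = 0 := by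
      rw [← hMN, hlA, hlA0, map_zero]
    have hfMN0 : fMN = 0 := by
      apply hHomMN
      intro a
      have h := congrFun hdMN0 a
      simp only [dMap, LinearMap.coe_mk, AddHom.coe_mk, Pi.zero_apply] at h
      exact sub_eq_zero.mp h
    -- Step 2: the (M,M) block
    have hMM' : pMM s t z = dMap k s t Mm Mm fMM := by
      rw [hMM, hfMN0]
      have h1 : (fun a => (e a).comp ((0 : ∀ q, Y q →ₗ[k] X q) (s a)))
          = (0 : RSp k s t Y Y) := by
        funext a; ext v; simp
      rw [h1, sub_zero]
    have hsideMM : ∀ x ∈ l.support,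
        x ∉ Set.range (embMM s t (X := X) (Y := Y)) → pMM s t x = 0 := by
      intro x hx hnr
      rcases casesS x (hlS hx) with ⟨w, _, rfl⟩ | ⟨r, _, rfl⟩ | ⟨u, _, rfl⟩ | ⟨v, _, rfl⟩
      · simp
      · exact absurd ⟨r, rfl⟩ hnr
      · simp
      · simp
    set lC := Finsupp.comapDomain (embMM s t (X := X)) l (embMM_inj s t).injOn with hlCdef
    have hlC : pMM s t z = Finsupp.linearCombination k _root_.id lC := by
      rw [hz]; exact sum_block s t (embMM_inj s t) (pMM s t) (pMM_embMM s t) l hsideMM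
    have hsuppC : ↑lC.support ⊆ RM := by
      intro r hr
      have hr' : embMM s t (X := X) r ∈ l.support := by
        rw [Finsupp.mem_support_iff]
        have h2x := Finsupp.mem_support_iff.mp (Finset.mem_coe.mp hr)
        rwa [hlCdef, Finsupp.comapDomain_apply] at h2x
      rcases casesS _ (hlS hr') with ⟨w, hw, hwe⟩ | ⟨r', hr'', hre⟩ | ⟨u, hu, hue⟩ | ⟨v, hv, hve⟩
      · exact absurd ((embNM_eq_embMM s t hwe).1 ▸ hw.1) h0NM
      · exact (embMM_inj s t hre) ▸ hr''
      · exact absurd ((embMM_eq_embNN s t hue.symm).2 ▸ hu) h0N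
      · exact absurd ((embMM_eq_embMN s t hve.symm).2 ▸ hv) h0MN
    have hlC0 : lC = 0 := by
      apply hfinM lC ((Finsupp.mem_supported k _).mpr hsuppC)
      have hgoal : (LinearMap.range (dMap k s t Mm Mm)).mkQ
          (Finsupp.linearCombination k _root_.id lC) = 0 := by
        rw [← hlC, hMM', Submodule.mkQ_apply, Submodule.Quotient.mk_eq_zero]
        exact ⟨fMM, rfl⟩
      exact (Finsupp.apply_linearCombination_id k _ lC).symm.trans hgoal
    have hdMM0 : dMap k s t Mm Mm fMM = 0 := by
      rw [← hMM', hlC, hlC0, map_zero]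
    obtain ⟨c, hc⟩ := hEndM fMM (by
      intro a
      have h := congrFun hdMM0 a
      simp only [dMap, LinearMap.coe_mk, AddHom.coe_mk, Pi.zero_apply] at h
      exact sub_eq_zero.mp h)
    -- Step 3: the (N,N) block
    have hNN' : pNN s t z = dMap k s t Nm Nm fNN := by
      rw [hNN, hfMN0]
      have h1 : (fun a => ((0 : ∀ q, Y q →ₗ[k] X q) (t a)).comp (e a))
          = (0 : RSp k s t X X) := by
        funext a; ext v; simp
      rw [h1, add_zero]
    have hsideNN : ∀ x ∈ l.support,
        x ∉ Set.range (embNN s t (X := X) (Y := Y)) → pNN s t x = 0 := by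
      intro x hx hnr
      rcases casesS x (hlS hx) with ⟨w, _, rfl⟩ | ⟨r, _, rfl⟩ | ⟨u, _, rfl⟩ | ⟨v, _, rfl⟩
      · simp
      · simp
      · exact absurd ⟨u, rfl⟩ hnr
      · simp
    set lB := Finsupp.comapDomain (embNN s t (Y := Y)) l (embNN_inj s t).injOn with hlBdef
    have hlB : pNN s t z = Finsupp.linearCombination k _root_.id lB := by
      rw [hz]; exact sum_block s t (embNN_inj s t) (pNN s t) (pNN_embNN s t) l hsideNN
    have hsuppB : ↑lB.support ⊆ RN := by
      intro u hu
      have hu' : embNN s t (Y := Y) u ∈ l.support := by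
        rw [Finsupp.mem_support_iff]
        have h2x := Finsupp.mem_support_iff.mp (Finset.mem_coe.mp hu)
        rwa [hlBdef, Finsupp.comapDomain_apply] at h2x
      rcases casesS _ (hlS hu') with ⟨w, hw, hwe⟩ | ⟨r, hr, hre⟩ | ⟨u', hu'', hue⟩ | ⟨v, hv, hve⟩
      · exact absurd ((embNM_eq_embNN s t hwe).1 ▸ hw.1) h0NM
      · exact absurd ((embMM_eq_embNN s t hre).1 ▸ hr) h0M
      · exact (embNN_inj s t hue) ▸ hu''
      · exact absurd ((embNN_eq_embMN s t hve.symm).2 ▸ hv) h0MN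
    have hlB0 : lB = 0 := by
      apply hfinN lB ((Finsupp.mem_supported k _).mpr hsuppB)
      have hgoal : (LinearMap.range (dMap k s t Nm Nm)).mkQ
          (Finsupp.linearCombination k _root_.id lB) = 0 := by
        rw [← hlB, hNN', Submodule.mkQ_apply, Submodule.Quotient.mk_eq_zero]
        exact ⟨fNN, rfl⟩
      exact (Finsupp.apply_linearCombination_id k _ lB).symm.trans hgoal
    have hdNN0 : dMap k s t Nm Nm fNN = 0 := by
      rw [← hNN', hlB, hlB0, map_zero]
    obtain ⟨c', hc'⟩ := hEndN fNN (by
      intro a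
      have h := congrFun hdNN0 a
      simp only [dMap, LinearMap.coe_mk, AddHom.coe_mk, Pi.zero_apply] at h
      exact sub_eq_zero.mp h)
    -- Step 4: the (N,M) block
    have hNM' : pNM s t z = dMap k s t Nm Mm fNM + (c - c') • e := by
      rw [hNM]
      have h1 : (fun a => (fMM (t a)).comp (e a)) = c • e := by
        funext a; ext v; simp [hc (t a)]
      have h2 : (fun a => (e a).comp (fNN (s a))) = c' • e := by
        funext a; ext v; simp [hc' (s a)]
      rw [h1, h2, sub_smul]
      abel
    have hsideNM : ∀ x ∈ l.support,
        x ∉ Set.range (embNM s t (X := X) (Y := Y)) → pNM s t x = 0 := by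
      intro x hx hnr
      rcases casesS x (hlS hx) with ⟨w, _, rfl⟩ | ⟨r, _, rfl⟩ | ⟨u, _, rfl⟩ | ⟨v, _, rfl⟩
      · exact absurd ⟨w, rfl⟩ hnr
      · simp
      · simp
      · simp
    set lD := Finsupp.comapDomain (embNM s t) l (embNM_inj s t).injOn with hlDdef
    have hlD : pNM s t z = Finsupp.linearCombination k _root_.id lD := by
      rw [hz]; exact sum_block s t (embNM_inj s t) (pNM s t) (pNM_embNM s t) l hsideNM
    have hsuppD : ↑lD.support ⊆ RNM \ {e} := by
      intro w hw
      have hw' : embNM s t w ∈ l.support := by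
        rw [Finsupp.mem_support_iff]
        have h2x := Finsupp.mem_support_iff.mp (Finset.mem_coe.mp hw)
        rwa [hlDdef, Finsupp.comapDomain_apply] at h2x
      rcases casesS _ (hlS hw') with ⟨w', hw'', hwe⟩ | ⟨r, hr, hre⟩ | ⟨u, hu, hue⟩ | ⟨v, hv, hve⟩
      · have h1 : w' = w := embNM_inj s t hwe
        exact ⟨h1 ▸ hw''.1, h1 ▸ hw''.2⟩
      · exact absurd ((embNM_eq_embMM s t hre.symm).2 ▸ hr) h0M
      · exact absurd ((embNM_eq_embNN s t hue.symm).2 ▸ hu) h0N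
      · exact absurd ((embNM_eq_embMN s t hve.symm).2 ▸ hv) h0MN
    set l' := lD + Finsupp.single e (c' - c) with hl'def
    have hsupp' : ↑l'.support ⊆ RNM := by
      intro x hx
      have hx' := Finsupp.support_add (hl'def ▸ hx)
      rcases Finset.mem_union.mp hx' with h | h
      · exact (hsuppD h).1
      · have h2 := Finsupp.support_single_subset h
        rw [Finset.mem_singleton] at h2
        exact h2 ▸ he
    have hlc' : Finsupp.linearCombination k _root_.id l' = dMap k s t Nm Mm fNM := by
      rw [hl'def, map_add, ← hlD, Finsupp.linearCombination_single, id_eq, hNM',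
        add_assoc, ← add_smul]
      simp
    have hl'0 : l' = 0 := by
      apply hfinNM l' ((Finsupp.mem_supported k _).mpr hsupp')
      have hgoal : (LinearMap.range (dMap k s t Nm Mm)).mkQ
          (Finsupp.linearCombination k _root_.id l') = 0 := by
        rw [hlc', Submodule.mkQ_apply, Submodule.Quotient.mk_eq_zero]
        exact ⟨fNM, rfl⟩
      exact (Finsupp.apply_linearCombination_id k _ l').symm.trans hgoal
    have hDe : lD e = 0 := by
      by_contra h
      exact (hsuppD (Finsupp.mem_support_iff.mpr h)).2 rfl
    have hcc : c' - c = 0 := by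
      have h := DFunLike.congr_fun hl'0 e
      rw [hl'def] at h
      simp only [Finsupp.add_apply, Finsupp.single_eq_same, Finsupp.coe_zero,
        Pi.zero_apply] at h
      rwa [hDe, zero_add] at h
    have hlD0 : lD = 0 := by
      have h1 : Finsupp.single e (c' - c) = 0 := by rw [hcc, Finsupp.single_zero]
      have h2 := hl'0
      rw [hl'def, h1, add_zero] at h2
      exact h2
    -- conclusion: l = 0
    refine Finsupp.ext fun x => ?_
    simp only [Finsupp.coe_zero, Pi.zero_apply]
    by_cases hx : x ∈ l.support
    · rcases casesS x (hlS hx) with ⟨w, _, rfl⟩ | ⟨r, _, rfl⟩ | ⟨u, _, rfl⟩ | ⟨v, _, rfl⟩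
      · have h := DFunLike.congr_fun hlD0 w
        rw [hlDdef, Finsupp.comapDomain_apply] at h
        exact h
      · have h := DFunLike.congr_fun hlC0 r
        rw [hlCdef, Finsupp.comapDomain_apply] at h
        exact h
      · have h := DFunLike.congr_fun hlB0 u
        rw [hlBdef, Finsupp.comapDomain_apply] at h
        exact h
      · have h := DFunLike.congr_fun hlA0 v
        rw [hlAdef, Finsupp.comapDomain_apply] at h
        exact h
    · exact Finsupp.notMem_support_iff.mp hx
  · -- spanning
    rw [span_quot_top]
    have htopNM : LinearMap.range (dMap k s t Nm Mm) ⊔ Submodule.span k RNM = ⊤ :=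
      (span_quot_top _ _).mp hRNM.2
    have htopM : LinearMap.range (dMap k s t Mm Mm) ⊔ Submodule.span k RM = ⊤ :=
      (span_quot_top _ _).mp hRM.2
    have htopN : LinearMap.range (dMap k s t Nm Nm) ⊔ Submodule.span k RN = ⊤ :=
      (span_quot_top _ _).mp hRN.2
    have htopMN : LinearMap.range (dMap k s t Mm Nm) ⊔ Submodule.span k RMN = ⊤ :=
      (span_quot_top _ _).mp hRMN.2
    -- claim 1 : all of `embNM` lands in `KB ⊔ span SS`
    have c1 : ∀ w : RSp k s t X Y, embNM s t w ∈ KB ⊔ Submodule.span k SS := by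
      intro w
      have hw : w ∈ LinearMap.range (dMap k s t Nm Mm) ⊔ Submodule.span k RNM := by
        rw [htopNM]; trivial
      rcases Submodule.mem_sup.mp hw with ⟨w₁, hw₁, w₂, hw₂, rfl⟩
      rw [show embNM s t (w₁ + w₂) = embNM s t w₁ + embNM s t w₂ from
        map_add (LembNM s t) w₁ w₂]
      refine Submodule.add_mem _ ?_ ?_
      · obtain ⟨g, rfl⟩ := hw₁
        exact Submodule.mem_sup_left ⟨HNM g, E_NM s t Mm Nm e g⟩
      · have hmem : embNM s t w₂ ∈ Submodule.map (LembNM s t (X := X))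
            (Submodule.span k RNM) := Submodule.mem_map_of_mem hw₂
        rw [← Submodule.span_image] at hmem
        have hle : Submodule.span k (⇑(LembNM s t (X := X)) '' RNM)
            ≤ KB ⊔ Submodule.span k SS := by
          rw [Submodule.span_le]
          rintro x ⟨v, hv, rfl⟩
          by_cases hve : v = e
          · rw [hve]
            exact Submodule.mem_sup_left (embNM_e_mem s t Mm Nm e)
          · refine Submodule.mem_sup_right (Submodule.subset_span ?_)
            rw [hSS]
            exact Or.inl (Or.inl (Or.inl ⟨v, ⟨hv, hve⟩, rfl⟩))
        exact hle hmem
    -- claim 2 : all of `embNN` lands in `KB ⊔ span SS`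
    have c2 : ∀ u : RSp k s t X X, embNN s t (Y := Y) u ∈ KB ⊔ Submodule.span k SS := by
      intro u
      have hu : u ∈ LinearMap.range (dMap k s t Nm Nm) ⊔ Submodule.span k RN := by
        rw [htopN]; trivial
      rcases Submodule.mem_sup.mp hu with ⟨u₁, hu₁, u₂, hu₂, rfl⟩
      rw [show embNN s t (Y := Y) (u₁ + u₂) = embNN s t u₁ + embNN s t u₂ from
        map_add (LembNN s t) u₁ u₂]
      refine Submodule.add_mem _ ?_ ?_
      · obtain ⟨g, rfl⟩ := hu₁
        have heq : embNN s t (Y := Y) (dMap k s t Nm Nm g)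
            = dBB s t Mm Nm e (HNN g) + embNM s t (fun a => (e a).comp (g (s a))) := by
          rw [E_NN]; abel
        rw [heq]
        exact Submodule.add_mem _ (Submodule.mem_sup_left ⟨HNN g, rfl⟩) (c1 _)
      · have hmem : embNN s t u₂ ∈ Submodule.map (LembNN s t (Y := Y))
            (Submodule.span k RN) := Submodule.mem_map_of_mem hu₂
        rw [← Submodule.span_image] at hmem
        have hle : Submodule.span k (⇑(LembNN s t (Y := Y)) '' RN)
            ≤ KB ⊔ Submodule.span k SS := by
          rw [Submodule.span_le]
          rintro x ⟨v, hv, rfl⟩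
          refine Submodule.mem_sup_right (Submodule.subset_span ?_)
          rw [hSS]
          exact Or.inl (Or.inr ⟨v, hv, rfl⟩)
        exact hle hmem
    -- claim 3 : all of `embMM` lands in `KB ⊔ span SS`
    have c3 : ∀ r : RSp k s t Y Y, embMM s t (X := X) r ∈ KB ⊔ Submodule.span k SS := by
      intro r
      have hr : r ∈ LinearMap.range (dMap k s t Mm Mm) ⊔ Submodule.span k RM := by
        rw [htopM]; trivial
      rcases Submodule.mem_sup.mp hr with ⟨r₁, hr₁, r₂, hr₂, rfl⟩
      rw [show embMM s t (X := X) (r₁ + r₂) = embMM s t r₁ + embMM s t r₂ from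
        map_add (LembMM s t) r₁ r₂]
      refine Submodule.add_mem _ ?_ ?_
      · obtain ⟨g, rfl⟩ := hr₁
        have heq : embMM s t (X := X) (dMap k s t Mm Mm g)
            = dBB s t Mm Nm e (HMM g) - embNM s t (fun a => (g (t a)).comp (e a)) := by
          rw [E_MM]; abel
        rw [heq]
        exact Submodule.sub_mem _ (Submodule.mem_sup_left ⟨HMM g, rfl⟩) (c1 _)
      · have hmem : embMM s t r₂ ∈ Submodule.map (LembMM s t (X := X))
            (Submodule.span k RM) := Submodule.mem_map_of_mem hr₂
        rw [← Submodule.span_image] at hmem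
        have hle : Submodule.span k (⇑(LembMM s t (X := X)) '' RM)
            ≤ KB ⊔ Submodule.span k SS := by
          rw [Submodule.span_le]
          rintro x ⟨v, hv, rfl⟩
          refine Submodule.mem_sup_right (Submodule.subset_span ?_)
          rw [hSS]
          exact Or.inl (Or.inl (Or.inr ⟨v, hv, rfl⟩))
        exact hle hmem
    -- claim 4 : all of `embMN` lands in `KB ⊔ span SS`
    have c4 : ∀ v : RSp k s t Y X, embMN s t v ∈ KB ⊔ Submodule.span k SS := by
      intro v
      have hv : v ∈ LinearMap.range (dMap k s t Mm Nm) ⊔ Submodule.span k RMN := by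
        rw [htopMN]; trivial
      rcases Submodule.mem_sup.mp hv with ⟨v₁, hv₁, v₂, hv₂, rfl⟩
      rw [show embMN s t (v₁ + v₂) = embMN s t v₁ + embMN s t v₂ from
        map_add (LembMN s t) v₁ v₂]
      refine Submodule.add_mem _ ?_ ?_
      · obtain ⟨g, rfl⟩ := hv₁
        have heq : embMN s t (dMap k s t Mm Nm g)
            = dBB s t Mm Nm e (HMN g) - embNN s t (fun a => (g (t a)).comp (e a))
              + embMM s t (fun a => (e a).comp (g (s a))) := by
          rw [E_MN]; abel
        rw [heq]
        exact Submodule.add_mem _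
          (Submodule.sub_mem _ (Submodule.mem_sup_left ⟨HMN g, rfl⟩) (c2 _)) (c3 _)
      · have hmem : embMN s t v₂ ∈ Submodule.map (LembMN s t)
            (Submodule.span k RMN) := Submodule.mem_map_of_mem hv₂
        rw [← Submodule.span_image] at hmem
        have hle : Submodule.span k (⇑(LembMN s t) '' RMN)
            ≤ KB ⊔ Submodule.span k SS := by
          rw [Submodule.span_le]
          rintro x ⟨v', hv', rfl⟩
          refine Submodule.mem_sup_right (Submodule.subset_span ?_)
          rw [hSS]
          exact Or.inr ⟨v', hv', rfl⟩
        exact hle hmem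
    rw [eq_top_iff]
    intro r _
    rw [r_decomp s t r]
    exact Submodule.add_mem _ (Submodule.add_mem _ (Submodule.add_mem _
      (c3 (pMM s t r)) (c1 (pNM s t r))) (c4 (pMN s t r))) (c2 (pNN s t r))
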